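/- Let ν = (ν_0,…,ν_L) be nonnegative reals with ν_M = 0 for all M < L·p_src, and let 𝒬 = { Q pmf on ℳ : ∑_M Q(M)ν_M ≥ ∑_M 𝔟_{L,p_src}(M)ν_M + δ₁ }. Suppose η₁ ≥ 0 and δ₁ ≥ 0 satisfy sup_{Q ∈ 𝒬} 2^{−N_em·D(Q‖𝔟_{L,p_src})} ≤ η₁. If the random variables (v, N, m^N, u^N, x^N) satisfy: (a) v = (v_0,…,v_L) is multinomially distributed with N_em trials and per-trial distribution 𝔟_{L,p_odd} for some p_odd ≤ p_src, i.e. Pr(v) = (N_em!/∏_M v_M!)·∏_M 𝔟_{L,p_odd}(M)^{v_M}, and (b) almost surely on the event {N ≥ 1}, N·P̃_{m^N}(M) ≤ v_M for every M ∈ ℳ, then Pr( N ≥ 1 and ∑_M P̃_{m^N}(M)·ν_M > (N_em/N)·(∑_M 𝔟_{L,p_src}(M)·ν_M + δ₁) ) ≤ η₁. -/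

import Mathlib

open MeasureTheory Finset

/-- The binomial pmf with `L` trials and success probability `p`. -/
noncomputable def binomPmf (L : ℕ) (p : ℝ) (M : ℕ) : ℝ :=
  (Nat.choose L M : ℝ) * p ^ M * (1 - p) ^ (L - M)

/-- The type (empirical distribution) of the first `n` entries of a sequence `s : ℕ → α`. -/
noncomputable def seqType {α : Type*} [DecidableEq α] (n : ℕ) (s : ℕ → α) (a : α) : ℝ :=
  (((Finset.range n).filter (fun k => s k = a)).card : ℝ) / (n : ℝ)

lemma binomPmf_nonneg {L : ℕ} {p : ℝ} (hp0 : 0 ≤ p) (hp1 : p ≤ 1) (M : ℕ) :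
    0 ≤ binomPmf L p M := by
  have h1 : (0:ℝ) ≤ 1 - p := by linarith
  unfold binomPmf; positivity

lemma binomPmf_sum (L : ℕ) (p : ℝ) :
    ∑ M ∈ Finset.range (L+1), binomPmf L p M = 1 := by
  have h := add_pow p (1-p) L
  have h2 : p + (1-p) = 1 := by ring
  rw [h2, one_pow] at h
  rw [h]
  exact Finset.sum_congr rfl fun M _ => by unfold binomPmf; ring

lemma pow_mul_one_sub_pow_mono {p q : ℝ} {L M : ℕ} (hp0 : 0 ≤ p) (hpq : p ≤ q) (hq1 : q ≤ 1)
    (hM : (L:ℝ) * q ≤ M) (hML : M ≤ L) :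
    p ^ M * (1-p) ^ (L - M) ≤ q ^ M * (1-q) ^ (L - M) := by
  rcases eq_or_lt_of_le hpq with rfl | hpq'
  · exact le_refl _
  rcases eq_or_lt_of_le hq1 with rfl | hq1'
  · -- q = 1, so M = L
    have hLM : (L:ℝ) ≤ (M:ℝ) := by linarith
    have hML' : M = L := le_antisymm hML (by exact_mod_cast hLM)
    subst hML'
    simp only [Nat.sub_self, pow_zero, mul_one]
    exact pow_le_pow_left₀ hp0 hpq _
  rcases eq_or_lt_of_le hp0 with rfl | hp0'
  · -- p = 0
    rcases Nat.eq_zero_or_pos M with rfl | hM1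
    · have hL0 : L = 0 := by
        by_contra hL
        have hq0 : (0:ℝ) < q := hpq'
        have : (0:ℝ) < (L:ℝ) * q := by
          have : (0:ℝ) < (L:ℝ) := by exact_mod_cast Nat.pos_of_ne_zero hL
          positivity
        simp at hM; linarith
      subst hL0
      norm_num
    · rw [zero_pow (by omega), zero_mul]
      have h1q : (0:ℝ) ≤ 1 - q := by linarith
      positivity
  · -- 0 < p < q < 1
    have hp1 : p < 1 := lt_of_lt_of_le hpq' hq1
    have hq0 : (0:ℝ) < q := lt_trans hp0' hpq'
    have h1q : (0:ℝ) < 1 - q := by linarith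
    have h1p : (0:ℝ) < 1 - p := by linarith
    have key1 : (q - p)/q ≤ Real.log q - Real.log p := by
      have h := Real.log_le_sub_one_of_pos (show (0:ℝ) < p/q by positivity)
      rw [Real.log_div (ne_of_gt hp0') (ne_of_gt hq0)] at h
      have : p/q - 1 = -((q-p)/q) := by field_simp; ring
      linarith [this ▸ h]
    have key2 : Real.log (1-p) - Real.log (1-q) ≤ (q - p)/(1-q) := by
      have h := Real.log_le_sub_one_of_pos (show (0:ℝ) < (1-p)/(1-q) by positivity)
      rw [Real.log_div (ne_of_gt h1p) (ne_of_gt h1q)] at h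
      have : (1-p)/(1-q) - 1 = (q-p)/(1-q) := by field_simp; ring
      linarith [this ▸ h]
    have hLMnn : (0:ℝ) ≤ (L:ℝ) - M := by
      have : (M:ℝ) ≤ L := by exact_mod_cast hML
      linarith
    have key3 : ((L:ℝ) - M) * ((q-p)/(1-q)) ≤ (M:ℝ) * ((q-p)/q) := by
      have h4 : ((L:ℝ) - M) * q ≤ (M:ℝ) * (1 - q) := by nlinarith
      have hqp : (0:ℝ) ≤ q - p := by linarith
      rw [mul_div_assoc', mul_div_assoc', div_le_div_iff₀ h1q hq0]
      nlinarith [mul_le_mul_of_nonneg_right h4 hqp]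
    have main : ((L:ℝ)-M) * (Real.log (1-p) - Real.log (1-q)) ≤ (M:ℝ) * (Real.log q - Real.log p) :=
      calc ((L:ℝ)-M) * (Real.log (1-p) - Real.log (1-q))
          ≤ ((L:ℝ)-M) * ((q-p)/(1-q)) := mul_le_mul_of_nonneg_left key2 hLMnn
        _ ≤ (M:ℝ) * ((q-p)/q) := key3
        _ ≤ (M:ℝ) * (Real.log q - Real.log p) :=
            mul_le_mul_of_nonneg_left key1 (Nat.cast_nonneg M)
    have hcast : ((L-M : ℕ):ℝ) = (L:ℝ) - M := by
      rw [Nat.cast_sub hML]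
    have hlog : Real.log (p^M * (1-p)^(L-M)) ≤ Real.log (q^M * (1-q)^(L-M)) := by
      rw [Real.log_mul (by positivity) (by positivity),
          Real.log_mul (by positivity) (by positivity),
          Real.log_pow, Real.log_pow, Real.log_pow, Real.log_pow, hcast]
      nlinarith [main]
    exact (Real.log_le_log_iff (by positivity) (by positivity)).mp hlog

lemma binomPmf_mono {p q : ℝ} {L M : ℕ} (hp0 : 0 ≤ p) (hpq : p ≤ q) (hq1 : q ≤ 1)
    (hM : (L:ℝ) * q ≤ M) (hML : M ≤ L) :
    binomPmf L p M ≤ binomPmf L q M := by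
  unfold binomPmf
  rw [mul_assoc, mul_assoc]
  exact mul_le_mul_of_nonneg_left (pow_mul_one_sub_pow_mono hp0 hpq hq1 hM hML)
    (Nat.cast_nonneg _)



lemma exists_tilt (s : Finset ℕ) (P ν : ℕ → ℝ) (hP0 : ∀ M ∈ s, 0 ≤ P M)
    (hPsum : ∑ M ∈ s, P M = 1) (hν0 : ∀ M ∈ s, 0 ≤ ν M) (t : ℝ) (ht0 : 0 ≤ t)
    (hE : ∑ M ∈ s, P M * ν M ≤ t) (M₀ : ℕ) (hM₀ : M₀ ∈ s) (hP₀ : 0 < P M₀)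
    (hν₀ : t < ν M₀) :
    ∃ l, 0 ≤ l ∧
      ∑ M ∈ s, P M * (2:ℝ) ^ (l * ν M) * ν M = t * ∑ M ∈ s, P M * (2:ℝ) ^ (l * ν M) := by
  set Z : ℝ → ℝ := fun l => ∑ M ∈ s, P M * (2:ℝ) ^ (l * ν M) with hZdef
  set A : ℝ → ℝ := fun l => ∑ M ∈ s, P M * (2:ℝ) ^ (l * ν M) * ν M with hAdef
  have hZpos : ∀ l, 0 < Z l := by
    intro l
    refine Finset.sum_pos' (fun M hM => ?_) ⟨M₀, hM₀, ?_⟩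
    · have := hP0 M hM
      positivity
    · have : (0:ℝ) < (2:ℝ) ^ (l * ν M₀) := Real.rpow_pos_of_pos two_pos _
      positivity
  have hZc : Continuous Z := by
    refine continuous_finset_sum _ fun M _ => Continuous.mul continuous_const ?_
    exact Continuous.rpow continuous_const (continuous_id'.mul continuous_const)
      (fun x => Or.inl two_ne_zero)
  have hAc : Continuous A := by
    refine continuous_finset_sum _ fun M _ => Continuous.mul (Continuous.mul continuous_const ?_)
      continuous_const
    exact Continuous.rpow continuous_const (continuous_id'.mul continuous_const)
      (fun x => Or.inl two_ne_zero)
  have hφc : Continuous fun l => A l / Z l := hAc.div hZc fun l => (hZpos l).ne'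
  have hφ0 : A 0 / Z 0 ≤ t := by
    have hZ0 : Z 0 = 1 := by
      rw [hZdef]; simp only [zero_mul, Real.rpow_zero, mul_one]; exact hPsum
    have hA0 : A 0 = ∑ M ∈ s, P M * ν M := by
      rw [hAdef]; simp only [zero_mul, Real.rpow_zero, mul_one]
    rw [hZ0, hA0, div_one]; exact hE
  -- choose Λ
  set c : ℝ := ν M₀ - t with hcdef
  have hc : 0 < c := by rw [hcdef]; linarith
  set X : ℝ := (t + 1) / (P M₀ * c) with hXdef
  have hX : 0 < X := by positivity
  set Λ : ℝ := max 0 (Real.logb 2 X / c) with hΛdef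
  have hΛ0 : 0 ≤ Λ := le_max_left _ _
  have h2c : X ≤ (2:ℝ) ^ (Λ * c) := by
    have h1 : Real.logb 2 X ≤ Λ * c := by
      have h2 : Real.logb 2 X / c ≤ Λ := le_max_right _ _
      calc Real.logb 2 X = (Real.logb 2 X / c) * c := by field_simp
        _ ≤ Λ * c := mul_le_mul_of_nonneg_right h2 hc.le
    calc X = (2:ℝ) ^ (Real.logb 2 X) := (Real.rpow_logb two_pos (by norm_num) hX).symm
      _ ≤ (2:ℝ) ^ (Λ * c) := Real.rpow_le_rpow_of_exponent_le one_le_two h1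
  have hkey : t * Z Λ ≤ A Λ := by
    have hAZ : A Λ - t * Z Λ = ∑ M ∈ s, P M * (2:ℝ) ^ (Λ * ν M) * (ν M - t) := by
      rw [hAdef, hZdef]
      rw [Finset.mul_sum, ← Finset.sum_sub_distrib]
      exact Finset.sum_congr rfl fun M _ => by ring
    have hterm : ∀ M ∈ s.erase M₀, -(P M * (2:ℝ) ^ (Λ * t) * t)
        ≤ P M * (2:ℝ) ^ (Λ * ν M) * (ν M - t) := by
      intro M hM
      have hMs := Finset.mem_of_mem_erase hM
      have hPM := hP0 M hMs
      have hνM := hν0 M hMs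
      rcases le_or_gt t (ν M) with h | h
      · have hpos : 0 ≤ P M * (2:ℝ) ^ (Λ * ν M) * (ν M - t) := by
          have : (0:ℝ) < (2:ℝ) ^ (Λ * ν M) := Real.rpow_pos_of_pos two_pos _
          have : 0 ≤ ν M - t := by linarith
          positivity
        have hneg : -(P M * (2:ℝ) ^ (Λ * t) * t) ≤ 0 := by
          have h3 : (0:ℝ) < (2:ℝ) ^ (Λ * t) := Real.rpow_pos_of_pos two_pos _
          have := mul_nonneg (mul_nonneg hPM h3.le) ht0
          linarith
        linarith
      · have hrle : (2:ℝ) ^ (Λ * ν M) ≤ (2:ℝ) ^ (Λ * t) :=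
          Real.rpow_le_rpow_of_exponent_le one_le_two
            (mul_le_mul_of_nonneg_left h.le hΛ0)
        have h1 : P M * (2:ℝ) ^ (Λ * ν M) * (t - ν M) ≤ P M * (2:ℝ) ^ (Λ * t) * t := by
          have h2 : (0:ℝ) < (2:ℝ) ^ (Λ * ν M) := Real.rpow_pos_of_pos two_pos _
          have h3 : (0:ℝ) < (2:ℝ) ^ (Λ * t) := Real.rpow_pos_of_pos two_pos _
          exact mul_le_mul (mul_le_mul_of_nonneg_left hrle hPM) (by linarith) (by linarith)
            (mul_nonneg hPM h3.le)
        nlinarith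
    have hsub : ∑ M ∈ s.erase M₀, P M ≤ 1 := by
      rw [← hPsum]
      exact Finset.sum_le_sum_of_subset_of_nonneg (Finset.erase_subset _ _)
        (fun M hM _ => hP0 M hM)
    have hrt : (0:ℝ) < (2:ℝ) ^ (Λ * t) := Real.rpow_pos_of_pos two_pos _
    have h5 : -((2:ℝ) ^ (Λ * t) * t)
        ≤ ∑ M ∈ s.erase M₀, P M * (2:ℝ) ^ (Λ * ν M) * (ν M - t) := by
      have h6 : ∑ M ∈ s.erase M₀, -(P M * (2:ℝ) ^ (Λ * t) * t)
          ≤ ∑ M ∈ s.erase M₀, P M * (2:ℝ) ^ (Λ * ν M) * (ν M - t) :=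
        Finset.sum_le_sum hterm
      have h7 : ∑ M ∈ s.erase M₀, -(P M * (2:ℝ) ^ (Λ * t) * t)
          = -((∑ M ∈ s.erase M₀, P M) * ((2:ℝ) ^ (Λ * t) * t)) := by
        rw [Finset.sum_mul]
        rw [← Finset.sum_neg_distrib]
        exact Finset.sum_congr rfl fun M _ => by ring
      have h8 : (∑ M ∈ s.erase M₀, P M) * ((2:ℝ) ^ (Λ * t) * t) ≤ (2:ℝ) ^ (Λ * t) * t := by
        have hnn : 0 ≤ ∑ M ∈ s.erase M₀, P M :=
          Finset.sum_nonneg (fun M hM => hP0 M (Finset.mem_of_mem_erase hM))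
        nlinarith [mul_nonneg hrt.le ht0]
      linarith [h6, h7 ▸ h6]
    have hsplit : A Λ - t * Z Λ
        = P M₀ * (2:ℝ) ^ (Λ * ν M₀) * (ν M₀ - t)
          + ∑ M ∈ s.erase M₀, P M * (2:ℝ) ^ (Λ * ν M) * (ν M - t) := by
      rw [hAZ, ← Finset.add_sum_erase _ _ hM₀]
    have h2exp : (2:ℝ) ^ (Λ * ν M₀) = (2:ℝ) ^ (Λ * t) * (2:ℝ) ^ (Λ * c) := by
      rw [← Real.rpow_add two_pos]
      congr 1
      rw [hcdef]; ring
    have hPXc : P M₀ * X * c = t + 1 := by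
      rw [hXdef]; field_simp
    have h6 : P M₀ * X * c ≤ P M₀ * (2:ℝ) ^ (Λ * c) * c := by
      have := mul_le_mul_of_nonneg_right (mul_le_mul_of_nonneg_left h2c hP₀.le) hc.le
      linarith
    have h7 : (2:ℝ) ^ (Λ * t) * (t + 1) ≤ P M₀ * (2:ℝ) ^ (Λ * ν M₀) * (ν M₀ - t) := by
      rw [h2exp, ← hcdef]
      calc (2:ℝ) ^ (Λ * t) * (t + 1) = (2:ℝ) ^ (Λ * t) * (P M₀ * X * c) := by rw [hPXc]
        _ ≤ (2:ℝ) ^ (Λ * t) * (P M₀ * (2:ℝ) ^ (Λ * c) * c) :=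
            mul_le_mul_of_nonneg_left h6 hrt.le
        _ = P M₀ * ((2:ℝ) ^ (Λ * t) * (2:ℝ) ^ (Λ * c)) * c := by ring
    nlinarith [h5, hsplit, h7, hrt]
  -- IVT
  have ht2 : t ≤ A Λ / Z Λ := (le_div_iff₀ (hZpos Λ)).mpr (by linarith [hkey])
  have := intermediate_value_Icc hΛ0 (hφc.continuousOn (s := Set.Icc 0 Λ))
  obtain ⟨l, hl, hφl⟩ := this ⟨hφ0, ht2⟩
  refine ⟨l, hl.1, ?_⟩
  have := (div_eq_iff (hZpos l).ne').mp hφl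
  linarith [this]


/-- Proposition 1: if `v` is multinomial with per-trial law `𝔟_{L,p_odd}`,
`p_odd ≤ p_src`, and a.s. on `{N ≥ 1}` one has `N·P̃_{m^N}(M) ≤ v_M` for all `M`, and
`sup_{Q∈𝒬} 2^{−N_em·D(Q‖𝔟_{L,p_src})} ≤ η₁`, then
`Pr(N ≥ 1 ∧ E_{P̃_{m^N}}[ν] > (N_em/N)(E_{𝔟_{L,p_src}}[ν] + δ₁))` ≤ η₁`. -/
theorem stmt_1 (L : ℕ) (hL : 2 ≤ L) (N_em : ℕ) (hNem : 1 ≤ N_em)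
    (p_src : ℝ) (hpsrc0 : 0 ≤ p_src) (hpsrc1 : p_src ≤ 1)
    (ν : ℕ → ℝ) (hν0 : ∀ M : ℕ, M ≤ L → 0 ≤ ν M)
    (hνzero : ∀ M : ℕ, (M : ℝ) < (L : ℝ) * p_src → ν M = 0)
    (η₁ δ₁ : ℝ) (hη₁ : 0 ≤ η₁) (hδ₁ : 0 ≤ δ₁)
    -- `sup_{Q ∈ 𝒬} 2^{−N_em·D(Q‖𝔟_{L,p_src})} ≤ η₁` (a `Q ∈ 𝒬` whose support is not
    -- contained in that of `𝔟_{L,p_src}` has `D = +∞`, hence `2^{−N_em·D} = 0 ≤ η₁`)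
    (hKL : ∀ Q : ℕ → ℝ, (∀ M, 0 ≤ Q M) → (∀ M, M ∉ Finset.range (L + 1) → Q M = 0) →
      (∑ M ∈ Finset.range (L + 1), Q M = 1) →
      (∑ M ∈ Finset.range (L + 1), Q M * ν M ≥
        ∑ M ∈ Finset.range (L + 1), binomPmf L p_src M * ν M + δ₁) →
      (∀ M ∈ Finset.range (L + 1), 0 < Q M → 0 < binomPmf L p_src M) →
      (2 : ℝ) ^ (-(N_em : ℝ) * ∑ M ∈ Finset.range (L + 1),
        (if 0 < Q M then Q M * Real.logb 2 (Q M / binomPmf L p_src M) else 0)) ≤ η₁)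
    {Ω : Type*} [MeasurableSpace Ω] (μ : Measure Ω) [IsProbabilityMeasure μ]
    (v : Ω → ℕ → ℕ) (N : Ω → ℕ) (m : Ω → ℕ → ℕ)
    (p_odd : ℝ) (hpodd0 : 0 ≤ p_odd) (hpodd : p_odd ≤ p_src)
    (hvsum : ∀ ω, ∑ M ∈ Finset.range (L + 1), v ω M = N_em)
    (hvsupp : ∀ ω, ∀ M, M ∉ Finset.range (L + 1) → v ω M = 0)
    -- (a) `v` is multinomially distributed with `N_em` trials and per-trial law `𝔟_{L,p_odd}`
    (hmultinom : ∀ v₀ : ℕ → ℕ, (∀ M, M ∉ Finset.range (L + 1) → v₀ M = 0) →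
      (∑ M ∈ Finset.range (L + 1), v₀ M = N_em) →
      (μ {ω | v ω = v₀}).toReal =
        (Nat.multinomial (Finset.range (L + 1)) v₀ : ℝ) *
          ∏ M ∈ Finset.range (L + 1), binomPmf L p_odd M ^ v₀ M)
    (hNub : ∀ ω, N ω ≤ N_em)
    (hmvals : ∀ ω, ∀ k, k < N ω → m ω k ≤ L)
    -- (b) a.s. on `{N ≥ 1}`: `N·P̃_{m^N}(M) ≤ v_M` for every `M`
    (hcount : μ {ω | 1 ≤ N ω ∧ ∃ M : ℕ,
        v ω M < ((Finset.range (N ω)).filter (fun k => m ω k = M)).card} = 0) :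
    (μ {ω | 1 ≤ N ω ∧
        ((N_em : ℝ) / (N ω : ℝ)) *
          (∑ M ∈ Finset.range (L + 1), binomPmf L p_src M * ν M + δ₁)
        < ∑ M ∈ Finset.range (L + 1), seqType (N ω) (m ω) M * ν M}).toReal ≤ η₁ := by
  classical
  have hpodd1 : p_odd ≤ 1 := hpodd.trans hpsrc1
  set E : ℝ := ∑ M ∈ Finset.range (L + 1), binomPmf L p_src M * ν M with hEdef
  set t : ℝ := E + δ₁ with htdef
  have hE0 : 0 ≤ E := Finset.sum_nonneg fun M hM =>
    mul_nonneg (binomPmf_nonneg hpsrc0 hpsrc1 M) (hν0 M (by simpa using Nat.lt_succ_iff.mp (Finset.mem_range.mp hM)))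
  have ht0 : 0 ≤ t := by rw [htdef]; linarith
  -- the finsets of relevant type vectors
  set V : Finset (ℕ → ℕ) := Finset.piAntidiag (Finset.range (L + 1)) N_em with hVdef
  set F : Finset (ℕ → ℕ) :=
    V.filter (fun v₀ => (N_em : ℝ) * t < ∑ M ∈ Finset.range (L + 1), (v₀ M : ℝ) * ν M) with hFdef
  set pr : (ℕ → ℕ) → ℝ := fun v₀ => (Nat.multinomial (Finset.range (L + 1)) v₀ : ℝ) *
      ∏ M ∈ Finset.range (L + 1), binomPmf L p_odd M ^ v₀ M with hprdef
  -- measure-theoretic reduction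
  have hmeas : (μ {ω | 1 ≤ N ω ∧
        ((N_em : ℝ) / (N ω : ℝ)) * t
        < ∑ M ∈ Finset.range (L + 1), seqType (N ω) (m ω) M * ν M}).toReal
      ≤ ∑ v₀ ∈ F, pr v₀ := by
    have hsub : {ω | 1 ≤ N ω ∧
        ((N_em : ℝ) / (N ω : ℝ)) * t
        < ∑ M ∈ Finset.range (L + 1), seqType (N ω) (m ω) M * ν M}
        ⊆ {ω | 1 ≤ N ω ∧ ∃ M : ℕ,
            v ω M < ((Finset.range (N ω)).filter (fun k => m ω k = M)).card}
          ∪ ⋃ v₀ ∈ F, {ω | v ω = v₀} := by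
      intro ω hω
      obtain ⟨hN1, hlt⟩ := hω
      by_cases hn : ∃ M : ℕ, v ω M < ((Finset.range (N ω)).filter (fun k => m ω k = M)).card
      · exact Or.inl ⟨hN1, hn⟩
      · push_neg at hn
        right
        have hNpos : (0 : ℝ) < (N ω : ℝ) := by exact_mod_cast hN1
        have hNne : (N ω : ℝ) ≠ 0 := hNpos.ne'
        have h1 : ∑ M ∈ Finset.range (L + 1), seqType (N ω) (m ω) M * ν M
            = (∑ M ∈ Finset.range (L + 1),
                (((Finset.range (N ω)).filter (fun k => m ω k = M)).card : ℝ) * ν M) / (N ω : ℝ) := by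
          rw [Finset.sum_div]
          refine Finset.sum_congr rfl fun M _ => ?_
          unfold seqType
          ring
        have hlt2 : (N_em : ℝ) * t < ∑ M ∈ Finset.range (L + 1),
            (((Finset.range (N ω)).filter (fun k => m ω k = M)).card : ℝ) * ν M := by
          rw [h1, div_mul_eq_mul_div] at hlt
          have := mul_lt_mul_of_pos_right hlt hNpos
          rw [div_mul_cancel₀ _ hNne, div_mul_cancel₀ _ hNne] at this
          exact this
        have hlt3 : (N_em : ℝ) * t < ∑ M ∈ Finset.range (L + 1), ((v ω M : ℝ)) * ν M := by
          refine lt_of_lt_of_le hlt2 (Finset.sum_le_sum fun M hM => ?_)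
          have hνM : 0 ≤ ν M := hν0 M (Nat.lt_succ_iff.mp (Finset.mem_range.mp hM))
          have : (((Finset.range (N ω)).filter (fun k => m ω k = M)).card : ℝ) ≤ (v ω M : ℝ) := by
            exact_mod_cast hn M
          exact mul_le_mul_of_nonneg_right this hνM
        have hmemV : v ω ∈ V := by
          rw [hVdef, Finset.mem_piAntidiag]
          refine ⟨hvsum ω, fun i hi => ?_⟩
          by_contra hcon
          exact hi (hvsupp ω i hcon)
        have hmemF : v ω ∈ F := by
          rw [hFdef, Finset.mem_filter]
          exact ⟨hmemV, hlt3⟩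
        exact Set.mem_biUnion hmemF rfl
    have hμ1 : μ {ω | 1 ≤ N ω ∧
        ((N_em : ℝ) / (N ω : ℝ)) * t
        < ∑ M ∈ Finset.range (L + 1), seqType (N ω) (m ω) M * ν M}
        ≤ ∑ v₀ ∈ F, μ {ω | v ω = v₀} := by
      calc μ _ ≤ μ ({ω | 1 ≤ N ω ∧ ∃ M : ℕ,
            v ω M < ((Finset.range (N ω)).filter (fun k => m ω k = M)).card}
          ∪ ⋃ v₀ ∈ F, {ω | v ω = v₀}) := measure_mono hsub
        _ ≤ μ {ω | 1 ≤ N ω ∧ ∃ M : ℕ,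
            v ω M < ((Finset.range (N ω)).filter (fun k => m ω k = M)).card}
            + μ (⋃ v₀ ∈ F, {ω | v ω = v₀}) := measure_union_le _ _
        _ = μ (⋃ v₀ ∈ F, {ω | v ω = v₀}) := by rw [hcount, zero_add]
        _ ≤ ∑ v₀ ∈ F, μ {ω | v ω = v₀} := measure_biUnion_finset_le F _
    have hfin : ∀ v₀ ∈ F, μ {ω | v ω = v₀} ≠ ⊤ := fun _ _ => measure_ne_top μ _
    have h2 : (μ {ω | 1 ≤ N ω ∧
        ((N_em : ℝ) / (N ω : ℝ)) * t
        < ∑ M ∈ Finset.range (L + 1), seqType (N ω) (m ω) M * ν M}).toReal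
        ≤ ∑ v₀ ∈ F, (μ {ω | v ω = v₀}).toReal := by
      rw [← ENNReal.toReal_sum hfin]
      exact ENNReal.toReal_mono (ENNReal.sum_ne_top.mpr hfin) hμ1
    refine h2.trans (le_of_eq (Finset.sum_congr rfl fun v₀ hv₀ => ?_))
    have hv₀V : v₀ ∈ V := Finset.mem_filter.mp hv₀ |>.1
    rw [hVdef, Finset.mem_piAntidiag] at hv₀V
    exact hmultinom v₀ (fun M hM => by
      by_contra hcon
      exact hM (hv₀V.2 M hcon)) hv₀V.1
  refine hmeas.trans ?_
  -- now a purely real-analytic estimate : ∑ v₀ ∈ F, pr v₀ ≤ η₁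
  have hprnn : ∀ v₀, 0 ≤ pr v₀ := by
    intro v₀
    rw [hprdef]
    exact mul_nonneg (Nat.cast_nonneg _)
      (Finset.prod_nonneg fun M _ => pow_nonneg (binomPmf_nonneg hpodd0 hpodd1 M) _)
  rcases Finset.eq_empty_or_nonempty F with hFe | ⟨v₁, hv₁⟩
  · rw [hFe, Finset.sum_empty]; exact hη₁
  rcases eq_or_lt_of_le hpsrc0 with hp0 | hp0
  · -- p_src = 0 : all bad configurations have probability zero
    have hps : p_src = 0 := hp0.symm
    have hpo : p_odd = 0 := le_antisymm (hps ▸ hpodd) hpodd0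
    have hpr0 : ∀ v₀ ∈ F, pr v₀ = 0 := by
      intro v₀ hv₀
      obtain ⟨hv₀V, hv₀b⟩ := Finset.mem_filter.mp hv₀
      rw [hVdef, Finset.mem_piAntidiag] at hv₀V
      -- find M ≥ 1 with v₀ M ≠ 0
      have hex : ∃ M ∈ Finset.range (L + 1), M ≠ 0 ∧ v₀ M ≠ 0 := by
        by_contra hcon
        push_neg at hcon
        have hb : ∀ M ∈ Finset.range (L + 1), (v₀ M : ℝ) * ν M ≤ (v₀ M : ℝ) * ν 0 := by
          intro M hM
          rcases Nat.eq_zero_or_pos M with rfl | hM1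
          · exact le_refl _
          · rcases Nat.eq_zero_or_pos (v₀ M) with hz | hz
            · simp [hz]
            · exact absurd (hcon M hM (by omega)) (by omega)
        have hsum1 : ∑ M ∈ Finset.range (L + 1), (v₀ M : ℝ) * ν M
            ≤ (N_em : ℝ) * ν 0 := by
          calc ∑ M ∈ Finset.range (L + 1), (v₀ M : ℝ) * ν M
              ≤ ∑ M ∈ Finset.range (L + 1), (v₀ M : ℝ) * ν 0 := Finset.sum_le_sum hb
            _ = (N_em : ℝ) * ν 0 := by
                rw [← Finset.sum_mul]
                congr 1
                exact_mod_cast congrArg (Nat.cast (R := ℝ)) hv₀V.1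
        have hE0' : E = ν 0 := by
          rw [hEdef]
          rw [Finset.sum_eq_single 0]
          · unfold binomPmf; rw [hps]; norm_num
          · intro M hM hM0
            unfold binomPmf
            rw [hps, zero_pow hM0]
            ring
          · intro h; exact absurd (Finset.mem_range.mpr (by omega)) h
        have hν00 : 0 ≤ ν 0 := hν0 0 (by omega)
        have : (N_em : ℝ) * t < (N_em : ℝ) * ν 0 := lt_of_lt_of_le hv₀b hsum1
        have hNem' : (0:ℝ) < (N_em : ℝ) := by exact_mod_cast hNem
        rw [htdef, hE0'] at this
        nlinarith
      obtain ⟨M₁, hM₁r, hM₁0, hM₁v⟩ := hex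
      simp only [hprdef]
      have : ∏ M ∈ Finset.range (L + 1), binomPmf L p_odd M ^ v₀ M = 0 := by
        refine Finset.prod_eq_zero hM₁r ?_
        unfold binomPmf
        rw [hpo, zero_pow hM₁0, mul_zero, zero_mul, zero_pow hM₁v]
      rw [this, mul_zero]
    rw [Finset.sum_eq_zero hpr0]
    exact hη₁
  · -- main case : 0 < p_src
    -- find M₀ with t < ν M₀ and binomPmf L p_src M₀ > 0
    obtain ⟨hv₁V, hv₁b⟩ := Finset.mem_filter.mp hv₁
    rw [hVdef, Finset.mem_piAntidiag] at hv₁V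
    have hex : ∃ M₀ ∈ Finset.range (L + 1), t < ν M₀ := by
      by_contra hcon
      push_neg at hcon
      have : ∑ M ∈ Finset.range (L + 1), (v₁ M : ℝ) * ν M ≤ (N_em : ℝ) * t := by
        calc ∑ M ∈ Finset.range (L + 1), (v₁ M : ℝ) * ν M
            ≤ ∑ M ∈ Finset.range (L + 1), (v₁ M : ℝ) * t :=
              Finset.sum_le_sum fun M hM =>
                mul_le_mul_of_nonneg_left (hcon M hM) (Nat.cast_nonneg _)
          _ = (N_em : ℝ) * t := by
              rw [← Finset.sum_mul]
              congr 1
              exact_mod_cast congrArg (Nat.cast (R := ℝ)) hv₁V.1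
      linarith [hv₁b]
    obtain ⟨M₀, hM₀r, hM₀t⟩ := hex
    have hM₀L : M₀ ≤ L := Nat.lt_succ_iff.mp (Finset.mem_range.mp hM₀r)
    have hν₀pos : 0 < ν M₀ := lt_of_le_of_lt ht0 hM₀t
    have hLpM : (L : ℝ) * p_src ≤ (M₀ : ℝ) := by
      by_contra hcon
      push_neg at hcon
      exact absurd (hνzero M₀ hcon) (ne_of_gt hν₀pos)
    have hP₀ : 0 < binomPmf L p_src M₀ := by
      unfold binomPmf
      have h1 : (0:ℝ) < (Nat.choose L M₀ : ℝ) := by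
        exact_mod_cast Nat.choose_pos hM₀L
      have h2 : (0:ℝ) < p_src ^ M₀ := pow_pos hp0 _
      have h3 : (0:ℝ) < (1 - p_src) ^ (L - M₀) := by
        rcases eq_or_lt_of_le hpsrc1 with hq1 | hq1
        · have : L ≤ M₀ := by
            have : (L:ℝ) ≤ (M₀:ℝ) := by rw [hq1] at hLpM; linarith
            exact_mod_cast this
          have : L - M₀ = 0 := by omega
          rw [this, pow_zero]; norm_num
        · have : (0:ℝ) < 1 - p_src := by linarith
          positivity
      positivity
    -- the tilted distribution
    obtain ⟨l, hl0, hAeq⟩ := exists_tilt (Finset.range (L + 1)) (binomPmf L p_src) ν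
      (fun M _ => binomPmf_nonneg hpsrc0 hpsrc1 M) (binomPmf_sum L p_src)
      (fun M hM => hν0 M (Nat.lt_succ_iff.mp (Finset.mem_range.mp hM))) t ht0
      (by rw [htdef]; linarith) M₀ hM₀r hP₀ hM₀t
    set Zl : ℝ := ∑ M ∈ Finset.range (L + 1), binomPmf L p_src M * (2:ℝ) ^ (l * ν M) with hZldef
    have hZpos : 0 < Zl := by
      refine Finset.sum_pos' (fun M hM => ?_) ⟨M₀, hM₀r, ?_⟩
      · have h1 := binomPmf_nonneg (L := L) hpsrc0 hpsrc1 M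
        have h2 : (0:ℝ) < (2:ℝ) ^ (l * ν M) := Real.rpow_pos_of_pos two_pos _
        positivity
      · have h2 : (0:ℝ) < (2:ℝ) ^ (l * ν M₀) := Real.rpow_pos_of_pos two_pos _
        positivity
    set Q : ℕ → ℝ := fun M => if M ∈ Finset.range (L + 1)
        then binomPmf L p_src M * (2:ℝ) ^ (l * ν M) / Zl else 0 with hQdef
    have hQval : ∀ M ∈ Finset.range (L + 1),
        Q M = binomPmf L p_src M * (2:ℝ) ^ (l * ν M) / Zl := fun M hM => if_pos hM
    have hQ0 : ∀ M, 0 ≤ Q M := by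
      intro M
      rw [hQdef]
      dsimp only
      split
      · exact div_nonneg (mul_nonneg (binomPmf_nonneg hpsrc0 hpsrc1 M)
          (Real.rpow_pos_of_pos two_pos _).le) hZpos.le
      · exact le_refl 0
    have hQout : ∀ M, M ∉ Finset.range (L + 1) → Q M = 0 := fun M hM => if_neg hM
    have hQsum : ∑ M ∈ Finset.range (L + 1), Q M = 1 := by
      rw [Finset.sum_congr rfl hQval, ← Finset.sum_div, ← hZldef, div_self hZpos.ne']
    have hQν : ∑ M ∈ Finset.range (L + 1), Q M * ν M = t := by
      have : ∑ M ∈ Finset.range (L + 1), Q M * ν M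
          = (∑ M ∈ Finset.range (L + 1), binomPmf L p_src M * (2:ℝ) ^ (l * ν M) * ν M) / Zl := by
        rw [Finset.sum_div]
        refine Finset.sum_congr rfl fun M hM => ?_
        rw [hQval M hM]; ring
      rw [this, hAeq, mul_div_assoc, div_self hZpos.ne', mul_one]
    have hQge : ∑ M ∈ Finset.range (L + 1), Q M * ν M
        ≥ ∑ M ∈ Finset.range (L + 1), binomPmf L p_src M * ν M + δ₁ := by
      rw [hQν, htdef, hEdef]
    have hQac : ∀ M ∈ Finset.range (L + 1), 0 < Q M → 0 < binomPmf L p_src M := by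
      intro M hM hQM
      rcases lt_or_eq_of_le (binomPmf_nonneg hpsrc0 hpsrc1 M) with h | h
      · exact h
      · exfalso
        rw [hQval M hM, ← h, zero_mul, zero_div] at hQM
        exact lt_irrefl 0 hQM
    have hKLval := hKL Q hQ0 hQout hQsum hQge hQac
    -- compute the KL sum
    have hKLsum : ∑ M ∈ Finset.range (L + 1),
        (if 0 < Q M then Q M * Real.logb 2 (Q M / binomPmf L p_src M) else 0)
        = l * t - Real.logb 2 Zl := by
      have hstep : ∀ M ∈ Finset.range (L + 1),
          (if 0 < Q M then Q M * Real.logb 2 (Q M / binomPmf L p_src M) else 0)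
          = Q M * (l * ν M - Real.logb 2 Zl) := by
        intro M hM
        by_cases hQM : 0 < Q M
        · rw [if_pos hQM]
          have hPM : 0 < binomPmf L p_src M := hQac M hM hQM
          have hdiv : Q M / binomPmf L p_src M = (2:ℝ) ^ (l * ν M) / Zl := by
            rw [hQval M hM]
            field_simp
          rw [hdiv, Real.logb_div (Real.rpow_pos_of_pos two_pos _).ne' hZpos.ne',
            Real.logb_rpow (by norm_num) (by norm_num)]
        · rw [if_neg hQM]
          have : Q M = 0 := le_antisymm (not_lt.mp hQM) (hQ0 M)
          rw [this, zero_mul]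
      rw [Finset.sum_congr rfl hstep]
      have : ∀ M ∈ Finset.range (L + 1),
          Q M * (l * ν M - Real.logb 2 Zl)
          = l * (Q M * ν M) - Real.logb 2 Zl * Q M := fun M _ => by ring
      rw [Finset.sum_congr rfl this, Finset.sum_sub_distrib, ← Finset.mul_sum, ← Finset.mul_sum,
        hQν, hQsum, mul_one]
    rw [hKLsum] at hKLval
    -- Chernoff bound : ∑ v₀ ∈ F, pr v₀ ≤ 2 ^ (-(N_em) * (l * t - logb 2 Zl))
    refine le_trans ?_ hKLval
    -- Z for p_odd
    set Zodd : ℝ := ∑ M ∈ Finset.range (L + 1), binomPmf L p_odd M * (2:ℝ) ^ (l * ν M)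
      with hZodddef
    have hZoddnn : 0 ≤ Zodd := Finset.sum_nonneg fun M hM =>
      mul_nonneg (binomPmf_nonneg hpodd0 hpodd1 M) (Real.rpow_pos_of_pos two_pos _).le
    have hZoddle : Zodd ≤ Zl := by
      have hkey : ∀ M ∈ Finset.range (L + 1),
          binomPmf L p_odd M * ((2:ℝ) ^ (l * ν M) - 1)
          ≤ binomPmf L p_src M * ((2:ℝ) ^ (l * ν M) - 1) := by
        intro M hM
        have hML : M ≤ L := Nat.lt_succ_iff.mp (Finset.mem_range.mp hM)
        by_cases hν : ν M = 0
        · rw [hν, mul_zero, Real.rpow_zero, sub_self, mul_zero, mul_zero]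
        · have hLp : (L:ℝ) * p_src ≤ M := by
            by_contra hcon
            push_neg at hcon
            exact hν (hνzero M hcon)
          have hmono := binomPmf_mono hpodd0 hpodd hpsrc1 hLp hML
          have hfac : 0 ≤ (2:ℝ) ^ (l * ν M) - 1 := by
            have : (0:ℝ) ≤ l * ν M := mul_nonneg hl0 (hν0 M hML)
            have h2 : (2:ℝ) ^ (0:ℝ) ≤ (2:ℝ) ^ (l * ν M) :=
              Real.rpow_le_rpow_of_exponent_le one_le_two this
            rw [Real.rpow_zero] at h2
            linarith
          exact mul_le_mul_of_nonneg_right hmono hfac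
      have hsplit : ∀ p : ℝ, ∑ M ∈ Finset.range (L + 1), binomPmf L p M * (2:ℝ) ^ (l * ν M)
          = (∑ M ∈ Finset.range (L + 1), binomPmf L p M)
            + ∑ M ∈ Finset.range (L + 1), binomPmf L p M * ((2:ℝ) ^ (l * ν M) - 1) := by
        intro p
        rw [← Finset.sum_add_distrib]
        exact Finset.sum_congr rfl fun M _ => by ring
      rw [hZodddef, hZldef, hsplit p_odd, hsplit p_src, binomPmf_sum, binomPmf_sum]
      exact add_le_add (le_refl 1) (Finset.sum_le_sum hkey)
    -- per-term Chernoff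
    have hterm : ∀ v₀ ∈ F, pr v₀
        ≤ ((Nat.multinomial (Finset.range (L + 1)) v₀ : ℝ) *
            ∏ M ∈ Finset.range (L + 1),
              (binomPmf L p_odd M * (2:ℝ) ^ (l * ν M)) ^ v₀ M)
          * (2:ℝ) ^ (-(l * ((N_em : ℝ) * t))) := by
      intro v₀ hv₀
      obtain ⟨hv₀V, hv₀b⟩ := Finset.mem_filter.mp hv₀
      have hgid : ∏ M ∈ Finset.range (L + 1),
          (binomPmf L p_odd M * (2:ℝ) ^ (l * ν M)) ^ v₀ M
          = (∏ M ∈ Finset.range (L + 1), binomPmf L p_odd M ^ v₀ M)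
            * (2:ℝ) ^ (l * ∑ M ∈ Finset.range (L + 1), (v₀ M : ℝ) * ν M) := by
        rw [Finset.mul_sum]
        rw [Real.rpow_sum_of_pos two_pos]
        rw [← Finset.prod_mul_distrib]
        refine Finset.prod_congr rfl fun M hM => ?_
        rw [mul_pow]
        congr 1
        rw [← Real.rpow_natCast ((2:ℝ) ^ (l * ν M)) (v₀ M), ← Real.rpow_mul (by norm_num)]
        congr 1
        ring
      rw [hgid]
      have hexp : (1:ℝ) ≤ (2:ℝ) ^ (l * ∑ M ∈ Finset.range (L + 1), (v₀ M : ℝ) * ν M)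
          * (2:ℝ) ^ (-(l * ((N_em : ℝ) * t))) := by
        rw [← Real.rpow_add two_pos]
        have h1 : (0:ℝ) ≤ l * (∑ M ∈ Finset.range (L + 1), (v₀ M : ℝ) * ν M)
            + -(l * ((N_em : ℝ) * t)) := by
          have : (0:ℝ) ≤ (∑ M ∈ Finset.range (L + 1), (v₀ M : ℝ) * ν M) - (N_em : ℝ) * t :=
            le_of_lt (by linarith [hv₀b])
          nlinarith
        calc (1:ℝ) = (2:ℝ) ^ (0:ℝ) := (Real.rpow_zero 2).symm
          _ ≤ _ := Real.rpow_le_rpow_of_exponent_le one_le_two h1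
      calc pr v₀ = pr v₀ * 1 := (mul_one _).symm
        _ ≤ pr v₀ * ((2:ℝ) ^ (l * ∑ M ∈ Finset.range (L + 1), (v₀ M : ℝ) * ν M)
              * (2:ℝ) ^ (-(l * ((N_em : ℝ) * t)))) :=
            mul_le_mul_of_nonneg_left hexp (hprnn v₀)
        _ = ((Nat.multinomial (Finset.range (L + 1)) v₀ : ℝ) *
              ((∏ M ∈ Finset.range (L + 1), binomPmf L p_odd M ^ v₀ M)
                * (2:ℝ) ^ (l * ∑ M ∈ Finset.range (L + 1), (v₀ M : ℝ) * ν M)))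
            * (2:ℝ) ^ (-(l * ((N_em : ℝ) * t))) := by rw [hprdef]; ring
    -- sum up
    have hgnn : ∀ v₀ ∈ V, 0 ≤ (Nat.multinomial (Finset.range (L + 1)) v₀ : ℝ) *
        ∏ M ∈ Finset.range (L + 1), (binomPmf L p_odd M * (2:ℝ) ^ (l * ν M)) ^ v₀ M :=
      fun v₀ _ => mul_nonneg (Nat.cast_nonneg _) (Finset.prod_nonneg fun M _ =>
        pow_nonneg (mul_nonneg (binomPmf_nonneg hpodd0 hpodd1 M)
          (Real.rpow_pos_of_pos two_pos _).le) _)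
    have hsumV : ∑ v₀ ∈ V, (Nat.multinomial (Finset.range (L + 1)) v₀ : ℝ) *
        ∏ M ∈ Finset.range (L + 1), (binomPmf L p_odd M * (2:ℝ) ^ (l * ν M)) ^ v₀ M
        = Zodd ^ N_em := by
      rw [hZodddef, Finset.sum_pow_eq_sum_piAntidiag, hVdef]
    have hrneg : (0:ℝ) ≤ (2:ℝ) ^ (-(l * ((N_em : ℝ) * t))) :=
      (Real.rpow_pos_of_pos two_pos _).le
    calc ∑ v₀ ∈ F, pr v₀
        ≤ ∑ v₀ ∈ F, ((Nat.multinomial (Finset.range (L + 1)) v₀ : ℝ) *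
            ∏ M ∈ Finset.range (L + 1),
              (binomPmf L p_odd M * (2:ℝ) ^ (l * ν M)) ^ v₀ M)
          * (2:ℝ) ^ (-(l * ((N_em : ℝ) * t))) := Finset.sum_le_sum hterm
      _ = (∑ v₀ ∈ F, (Nat.multinomial (Finset.range (L + 1)) v₀ : ℝ) *
            ∏ M ∈ Finset.range (L + 1),
              (binomPmf L p_odd M * (2:ℝ) ^ (l * ν M)) ^ v₀ M)
          * (2:ℝ) ^ (-(l * ((N_em : ℝ) * t))) := by rw [Finset.sum_mul]
      _ ≤ (∑ v₀ ∈ V, (Nat.multinomial (Finset.range (L + 1)) v₀ : ℝ) *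
            ∏ M ∈ Finset.range (L + 1),
              (binomPmf L p_odd M * (2:ℝ) ^ (l * ν M)) ^ v₀ M)
          * (2:ℝ) ^ (-(l * ((N_em : ℝ) * t))) := by
          refine mul_le_mul_of_nonneg_right ?_ hrneg
          exact Finset.sum_le_sum_of_subset_of_nonneg (Finset.filter_subset _ _)
            (fun v₀ hv₀ _ => hgnn v₀ hv₀)
      _ = Zodd ^ N_em * (2:ℝ) ^ (-(l * ((N_em : ℝ) * t))) := by rw [hsumV]
      _ ≤ Zl ^ N_em * (2:ℝ) ^ (-(l * ((N_em : ℝ) * t))) :=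
          mul_le_mul_of_nonneg_right (pow_le_pow_left₀ hZoddnn hZoddle _) hrneg
      _ = (2 : ℝ) ^ (-(N_em : ℝ) * (l * t - Real.logb 2 Zl)) := by
          have h1 : Zl ^ N_em = (2:ℝ) ^ ((Real.logb 2 Zl) * (N_em : ℝ)) := by
            rw [Real.rpow_mul (by norm_num), Real.rpow_logb two_pos (by norm_num) hZpos,
              Real.rpow_natCast]
          rw [h1, ← Real.rpow_add two_pos]
          congr 1
          ring
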